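/- If the set function f : 2^V → ℝ≥0 is monotone and β-weakly submodular from above for some β ≥ 1, then for every point x = (p_1,…,p_K) ∈ ∏_{k=1}^K Δ_{n_k}, one has ⟨ x, ∇F(x) ⟩ ≤ β·F(x). In particular, if f is monotone and α-weakly DR-submodular for some α ∈ (0,1], then ⟨ x, ∇F(x) ⟩ ≤ (1/α)·F(x) for every x ∈ ∏_{k=1}^K Δ_{n_k}. -/

import Mathlib

open Finset

noncomputable section

namespace Multinoulli

variable {K : ℕ}

/-- An element of the ground set `V`: a community index `k` together with the
index `m` of the element `v_k^m` inside its community `V_k`. -/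
abbrev Elem (n : Fin K → ℕ) := Σ k : Fin K, Fin (n k)

/-- A sampling slot: a community `k` together with a trial index `b ∈ {1,…,B_k}`. -/
abbrev Slot (B : Fin K → ℕ) := Σ k : Fin K, Fin (B k)

/-- A joint outcome of all the independent multinoulli trials; `none` encodes a
draw of `∅`, which contributes no element. -/
abbrev Choice (n B : Fin K → ℕ) := ∀ s : Slot B, Option (Fin (n s.1))

/-- The probability that `Multi(p_k)` (the `k`-th block of `x`) assigns to a given
outcome: `x ⟨k,m⟩` for the element `v_k^m` and `1 - Σ_m x ⟨k,m⟩` for `∅`. -/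
def prob (n : Fin K → ℕ) (x : Elem n → ℝ) (k : Fin K) : Option (Fin (n k)) → ℝ
  | some m => x ⟨k, m⟩
  | none => 1 - ∑ m : Fin (n k), x ⟨k, m⟩

/-- The probability of the joint outcome `e` (all trials are mutually independent). -/
def jointProb (n B : Fin K → ℕ) (x : Elem n → ℝ) (e : Choice n B) : ℝ :=
  ∏ s : Slot B, prob n x s.1 (e s)

/-- The subset of the ground set selected by the trials whose slot lies in `A`
(a draw of `∅` contributes no element to the union). -/
def chosen (n B : Fin K → ℕ) (e : Choice n B) (A : Finset (Slot B)) : Finset (Elem n) :=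
  A.biUnion fun s => ((e s).map fun m => (⟨s.1, m⟩ : Elem n)).toFinset

/-- The Multinoulli Extension `F` of the set function `f`:
`F(x) = E[f(∪_{k,b} {e_k^b})]` for mutually independent `e_k^b ∼ Multi(p_k)`. -/
def ME (n B : Fin K → ℕ) (f : Finset (Elem n) → ℝ) (x : Elem n → ℝ) : ℝ :=
  ∑ e : Choice n B, f (chosen n B e Finset.univ) * jointProb n B x e

/-- The first-order partial derivative `∂G/∂x_i` at `x`. -/
def pderiv (n : Fin K → ℕ) (G : (Elem n → ℝ) → ℝ) (i : Elem n) (x : Elem n → ℝ) : ℝ :=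
  deriv (fun t => G (Function.update x i t)) (x i)

/-- The gradient `∇G(x)`. -/
def grad (n : Fin K → ℕ) (G : (Elem n → ℝ) → ℝ) (x : Elem n → ℝ) : Elem n → ℝ :=
  fun i => pderiv n G i x

/-- The second-order partial derivative `∂²G/∂x_i∂x_j` at `x`. -/
def pderiv2 (n : Fin K → ℕ) (G : (Elem n → ℝ) → ℝ) (i j : Elem n) (x : Elem n → ℝ) : ℝ :=
  pderiv n (fun y => pderiv n G j y) i x

/-- The Euclidean inner product on `∏_k ℝ^{n_k}`. -/
def inner' (n : Fin K → ℕ) (u v : Elem n → ℝ) : ℝ := ∑ i : Elem n, u i * v i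

/-- Membership in the product of simplices `∏_{k=1}^K Δ_{n_k}`. -/
def InSimplex (n : Fin K → ℕ) (x : Elem n → ℝ) : Prop :=
  (∀ i, 0 ≤ x i) ∧ ∀ k : Fin K, ∑ m : Fin (n k), x ⟨k, m⟩ ≤ 1

/-- Feasibility for the partition constraint: `|S ∩ V_k| ≤ B_k` for all `k`. -/
def Feasible (n B : Fin K → ℕ) (S : Finset (Elem n)) : Prop :=
  ∀ k : Fin K, (S.filter fun i => i.1 = k).card ≤ B k

/-- Monotonicity of a set function. -/
def MonotoneSet (n : Fin K → ℕ) (f : Finset (Elem n) → ℝ) : Prop :=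
  ∀ A B : Finset (Elem n), A ⊆ B → f A ≤ f B

/-- The marginal contribution `f(v|A) = f(A ∪ {v}) - f(A)`. -/
def marg (n : Fin K → ℕ) (f : Finset (Elem n) → ℝ) (v : Elem n) (A : Finset (Elem n)) : ℝ :=
  f (insert v A) - f A

/-- `α`-weak DR-submodularity: `f(v|A) ≥ α·f(v|B)` for all `A ⊆ B` and `v ∉ B`. -/
def WeaklyDR (n : Fin K → ℕ) (f : Finset (Elem n) → ℝ) (α : ℝ) : Prop :=
  ∀ A B : Finset (Elem n), A ⊆ B → ∀ v, v ∉ B → α * marg n f v B ≤ marg n f v A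

/-- `γ`-weak submodularity from below. -/
def WeaklyBelow (n : Fin K → ℕ) (f : Finset (Elem n) → ℝ) (γ : ℝ) : Prop :=
  ∀ A B : Finset (Elem n), A ⊆ B → γ * (f B - f A) ≤ ∑ v ∈ B \ A, marg n f v A

/-- `β`-weak submodularity from above. -/
def WeaklyAbove (n : Fin K → ℕ) (f : Finset (Elem n) → ℝ) (β : ℝ) : Prop :=
  ∀ A B : Finset (Elem n), A ⊆ B → ∑ v ∈ B \ A, marg n f v (B.erase v) ≤ β * (f B - f A)

/-- The scaled indicator vector `Σ_{k=1}^K (1/B_k)·1_{S∩V_k}`. -/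
def indVec (n B : Fin K → ℕ) (S : Finset (Elem n)) : Elem n → ℝ :=
  fun i => if i ∈ S then ((B i.1 : ℝ))⁻¹ else 0



variable {n B : Fin K → ℕ}

def dcoef (n : Fin K → ℕ) (i : Elem n) (k : Fin K) : Option (Fin (n k)) → ℝ
  | some m => if (⟨k, m⟩ : Elem n) = i then 1 else 0
  | none => if k = i.1 then -1 else 0

lemma hasDerivAt_prob (x : Elem n → ℝ) (i : Elem n) (k : Fin K) (o : Option (Fin (n k))) (t : ℝ) :
    HasDerivAt (fun t => prob n (Function.update x i t) k o) (dcoef n i k o) t := by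
  have hupd : ∀ m : Fin (n k), HasDerivAt (fun t => Function.update x i t ⟨k, m⟩)
      (if (⟨k, m⟩ : Elem n) = i then (1:ℝ) else 0) t := by
    intro m
    simp only [Function.update_apply]
    by_cases h : (⟨k, m⟩ : Elem n) = i
    · simpa [h] using hasDerivAt_id' t
    · simpa [h] using hasDerivAt_const t (x ⟨k, m⟩)
  cases o with
  | some m => simpa only [prob, dcoef] using hupd m
  | none =>
    have hsum : HasDerivAt (fun t => ∑ m : Fin (n k), Function.update x i t ⟨k, m⟩)
        (∑ m : Fin (n k), if (⟨k, m⟩ : Elem n) = i then (1:ℝ) else 0) t :=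
      HasDerivAt.fun_sum fun m _ => hupd m
    have hval : (∑ m : Fin (n k), if (⟨k, m⟩ : Elem n) = i then (1:ℝ) else 0)
        = if k = i.1 then 1 else 0 := by
      obtain ⟨ik, im⟩ := i
      by_cases hk : k = ik
      · subst hk; simp [Sigma.mk.inj_iff]
      · simp [Sigma.mk.inj_iff, hk]
    rw [hval] at hsum
    have h2 := (hasDerivAt_const t (1:ℝ)).sub hsum
    have h3 : (0 - if k = i.1 then (1:ℝ) else 0) = dcoef n i k none := by
      by_cases hk : k = i.1 <;> simp [dcoef, hk]
    rw [h3] at h2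
    exact h2

lemma sum_x_dcoef (x : Elem n → ℝ) (k : Fin K) (o : Option (Fin (n k))) :
    ∑ i : Elem n, x i * dcoef n i k o
      = prob n x k o - (if o = none then 1 else 0) := by
  cases o with
  | some m =>
    simp only [dcoef, prob, mul_ite, mul_one, mul_zero]
    simp
  | none =>
    simp only [dcoef, prob, mul_ite, mul_neg, mul_one, mul_zero]
    rw [← Finset.univ_sigma_univ, Finset.sum_sigma]
    have h1 : ∀ k' : Fin K, ∑ m : Fin (n k'), (if k = k' then -x ⟨k', m⟩ else 0)
        = if k = k' then -∑ m : Fin (n k'), x ⟨k', m⟩ else 0 := by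
      intro k'; split <;> simp
    simp only [h1]
    rw [Finset.sum_ite_eq]
    simp only [Finset.mem_univ, if_true, if_pos]
    ring

lemma hasDerivAt_ME (f : Finset (Elem n) → ℝ) (x : Elem n → ℝ) (i : Elem n) :
    HasDerivAt (fun t => ME n B f (Function.update x i t))
      (∑ e : Choice n B, f (chosen n B e Finset.univ) *
        ∑ s : Slot B, (∏ s' ∈ Finset.univ.erase s, prob n x s'.1 (e s')) * dcoef n i s.1 (e s))
      (x i) := by
  have hP : ∀ e : Choice n B, HasDerivAt (fun t => jointProb n B (Function.update x i t) e)
      (∑ s : Slot B, (∏ s' ∈ Finset.univ.erase s, prob n x s'.1 (e s')) * dcoef n i s.1 (e s))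
      (x i) := by
    intro e
    have h := HasDerivAt.fun_finsetProd (u := (Finset.univ : Finset (Slot B)))
      (f := fun (s : Slot B) t => prob n (Function.update x i t) s.1 (e s))
      (f' := fun s => dcoef n i s.1 (e s)) (x := x i)
      (fun s _ => hasDerivAt_prob x i s.1 (e s) (x i))
    simpa [jointProb, Function.update_eq_self, smul_eq_mul] using h
  have h := HasDerivAt.fun_sum (u := (Finset.univ : Finset (Choice n B)))
    (fun e _ => (hP e).const_mul (f (chosen n B e Finset.univ)))
  simpa [ME] using h

lemma chosen_congr (e₁ e₂ : Choice n B) (A : Finset (Slot B)) (h : ∀ s ∈ A, e₁ s = e₂ s) :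
    chosen n B e₁ A = chosen n B e₂ A :=
  Finset.biUnion_congr rfl fun s hs => by rw [h s hs]

lemma chosen_mono (e : Choice n B) {A A' : Finset (Slot B)} (h : A ⊆ A') :
    chosen n B e A ⊆ chosen n B e A' :=
  Finset.biUnion_subset_biUnion_of_subset_left _ h

lemma chosen_univ_eq (e : Choice n B) (s : Slot B) :
    chosen n B e Finset.univ
      = ((e s).map fun m => (⟨s.1, m⟩ : Elem n)).toFinset ∪ chosen n B e (Finset.univ.erase s) := by
  have h : (Finset.univ : Finset (Slot B)) = insert s (Finset.univ.erase s) :=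
    (Finset.insert_erase (Finset.mem_univ s)).symm
  conv_lhs => rw [h]
  simp only [chosen, Finset.biUnion_insert]

lemma chosen_univ_none (e : Choice n B) (s : Slot B) (h : e s = none) :
    chosen n B e Finset.univ = chosen n B e (Finset.univ.erase s) := by
  rw [chosen_univ_eq e s, h]; simp

lemma chosen_univ_some (e : Choice n B) (s : Slot B) (m : Fin (n s.1)) (h : e s = some m) :
    chosen n B e Finset.univ = insert (⟨s.1, m⟩ : Elem n) (chosen n B e (Finset.univ.erase s)) := by
  rw [chosen_univ_eq e s, h]
  ext v
  simp [or_comm]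

lemma mem_chosen_of_slot (e : Choice n B) {A : Finset (Slot B)} {s : Slot B} (hs : s ∈ A)
    {m : Fin (n s.1)} (h : e s = some m) : (⟨s.1, m⟩ : Elem n) ∈ chosen n B e A := by
  refine Finset.mem_biUnion.2 ⟨s, hs, ?_⟩
  simp [h]

lemma sum_choice_mul (s : Slot B) (h : Choice n B → ℝ)
    (hh : ∀ (e : Choice n B) (o : Option (Fin (n s.1))), h (Function.update e s o) = h e)
    (φ ψ : Option (Fin (n s.1)) → ℝ) (hsum : ∑ o, φ o = ∑ o, ψ o) :
    ∑ e : Choice n B, h e * φ (e s) = ∑ e : Choice n B, h e * ψ (e s) := by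
  classical
  set E := Equiv.piSplitAt s (fun s' : Slot B => Option (Fin (n s'.1))) with hE
  have h1 : ∀ (o : Option (Fin (n s.1))) r, E.symm (o, r) s = o := by
    intro o r; simp [hE, Equiv.piSplitAt]
  have h2 : ∀ (o : Option (Fin (n s.1))) r, h (E.symm (o, r)) = h (E.symm (none, r)) := by
    intro o r
    have hup : E.symm (o, r) = Function.update (E.symm (none, r)) s o := by
      funext j
      by_cases hj : j = s
      · subst hj; rw [Function.update_self]; exact h1 o r
      · rw [Function.update_of_ne hj]
        simp [hE, Equiv.piSplitAt, hj]
    rw [hup, hh]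
  have main : ∀ φ' : Option (Fin (n s.1)) → ℝ,
      ∑ e : Choice n B, h e * φ' (e s)
        = (∑ r, h (E.symm (none, r))) * ∑ o, φ' o := by
    intro φ'
    rw [← Equiv.sum_comp E.symm (fun e : Choice n B => h e * φ' (e s)), Fintype.sum_prod_type,
      Finset.mul_sum]
    refine Finset.sum_congr rfl fun o _ => ?_
    rw [Finset.sum_mul]
    refine Finset.sum_congr rfl fun r _ => ?_
    rw [h1, h2]
  rw [main φ, main ψ, hsum]

lemma comb_bound (hn : ∀ k, 1 ≤ n k) (f : Finset (Elem n) → ℝ) (hf0 : ∀ S, 0 ≤ f S)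
    (hmono : MonotoneSet n f) {β : ℝ} (hβ : 1 ≤ β) (hab : WeaklyAbove n f β) (e : Choice n B) :
    ∑ s : Slot B, (f (chosen n B e Finset.univ) - f (chosen n B e (Finset.univ.erase s)))
      ≤ β * f (chosen n B e Finset.univ) := by
  classical
  set R := chosen n B e Finset.univ with hR
  set T := Finset.univ.filter (fun s : Slot B => chosen n B e (Finset.univ.erase s) ≠ R) with hT
  set g : Slot B → Elem n :=
    fun s => (e s).elim (⟨s.1, ⟨0, hn s.1⟩⟩ : Elem n) (fun m => ⟨s.1, m⟩) with hg
  -- reduce the sum to T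
  have hsumT : ∑ s : Slot B, (f R - f (chosen n B e (Finset.univ.erase s)))
      = ∑ s ∈ T, (f R - f (chosen n B e (Finset.univ.erase s))) := by
    rw [hT]
    refine (Finset.sum_filter_of_ne ?_).symm
    intro s _ hne heq
    rw [heq] at hne; simp at hne
  -- facts about s ∈ T
  have hTfact : ∀ s ∈ T, g s ∈ R ∧ chosen n B e (Finset.univ.erase s) = R.erase (g s)
      ∧ g s ∉ chosen n B e (Finset.univ.erase s) := by
    intro s hs
    rw [hT, Finset.mem_filter] at hs
    obtain ⟨-, hne⟩ := hs
    obtain ⟨m, hm⟩ : ∃ m, e s = some m := by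
      cases ho : e s with
      | none => exact absurd (chosen_univ_none e s ho).symm hne
      | some m => exact ⟨m, rfl⟩
    have hgs : g s = (⟨s.1, m⟩ : Elem n) := by rw [hg]; simp [hm]
    have hins : R = insert (g s) (chosen n B e (Finset.univ.erase s)) := by
      rw [hgs, hR]; exact chosen_univ_some e s m hm
    have hnotmem : g s ∉ chosen n B e (Finset.univ.erase s) := by
      intro hmem
      exact hne ((Finset.insert_eq_self.2 hmem ▸ hins).symm)
    refine ⟨hins ▸ Finset.mem_insert_self _ _, ?_, hnotmem⟩
    rw [hins, Finset.erase_insert hnotmem]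
  -- injectivity of g on T
  have hinj : ∀ s₁ ∈ T, ∀ s₂ ∈ T, g s₁ = g s₂ → s₁ = s₂ := by
    intro s₁ h₁ s₂ h₂ hgeq
    by_contra hne
    obtain ⟨m₂, hm₂⟩ : ∃ m, e s₂ = some m := by
      rw [hT, Finset.mem_filter] at h₂
      cases ho : e s₂ with
      | none => exact absurd (chosen_univ_none e s₂ ho).symm h₂.2
      | some m => exact ⟨m, rfl⟩
    have hg₂ : g s₂ = (⟨s₂.1, m₂⟩ : Elem n) := by rw [hg]; simp [hm₂]
    have hmem : g s₂ ∈ chosen n B e (Finset.univ.erase s₁) := by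
      rw [hg₂]
      exact mem_chosen_of_slot e (Finset.mem_erase.2 ⟨fun h => hne h.symm, Finset.mem_univ _⟩) hm₂
    rw [← hgeq] at hmem
    exact (hTfact s₁ h₁).2.2 hmem
  -- compare with the sum over R
  have hle : ∑ s ∈ T, (f R - f (chosen n B e (Finset.univ.erase s)))
      ≤ ∑ v ∈ R, (f R - f (R.erase v)) := by
    have heq : ∑ s ∈ T, (f R - f (chosen n B e (Finset.univ.erase s)))
        = ∑ v ∈ T.image g, (f R - f (R.erase v)) := by
      rw [Finset.sum_image hinj]
      exact Finset.sum_congr rfl fun s hs => by rw [(hTfact s hs).2.1]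
    rw [heq]
    refine Finset.sum_le_sum_of_subset_of_nonneg ?_ ?_
    · intro v hv
      obtain ⟨s, hs, rfl⟩ := Finset.mem_image.1 hv
      exact (hTfact s hs).1
    · intro v _ _
      have := hmono (R.erase v) R (Finset.erase_subset _ _)
      linarith
  -- weak submodularity from above at (∅, R)
  have habR := hab ∅ R (Finset.empty_subset R)
  rw [Finset.sdiff_empty] at habR
  have hmargeq : ∑ v ∈ R, marg n f v (R.erase v) = ∑ v ∈ R, (f R - f (R.erase v)) := by
    refine Finset.sum_congr rfl fun v hv => ?_
    rw [marg, Finset.insert_erase hv]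
  have hβ0 : (0:ℝ) ≤ β := le_trans zero_le_one hβ
  have hfe := hf0 ∅
  calc ∑ s : Slot B, (f R - f (chosen n B e (Finset.univ.erase s)))
      ≤ ∑ v ∈ R, (f R - f (R.erase v)) := by rw [hsumT]; exact hle
    _ ≤ β * (f R - f ∅) := by rw [← hmargeq]; exact habR
    _ ≤ β * f R := by nlinarith

lemma dr_weaklyAbove (f : Finset (Elem n) → ℝ) {α : ℝ} (hα : 0 < α)
    (hdr : WeaklyDR n f α) : WeaklyAbove n f α⁻¹ := by
  have key : ∀ (Bs D A : Finset (Elem n)), A ⊆ Bs → Bs \ A = D →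
      α * ∑ v ∈ D, marg n f v (Bs.erase v) ≤ f Bs - f A := by
    intro Bs D
    induction D using Finset.induction_on with
    | empty =>
      intro A hAB hD
      have : A = Bs := hAB.antisymm (Finset.sdiff_eq_empty_iff_subset.mp hD)
      simp [this]
    | @insert a D' ha ih =>
      intro A hAB hD
      have haBA : a ∈ Bs \ A := hD ▸ Finset.mem_insert_self a D'
      have haB : a ∈ Bs := (Finset.mem_sdiff.1 haBA).1
      have haA : a ∉ A := (Finset.mem_sdiff.1 haBA).2
      have hA' : insert a A ⊆ Bs := Finset.insert_subset haB hAB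
      have hD' : Bs \ insert a A = D' := by
        rw [Finset.sdiff_insert, hD, Finset.erase_insert ha]
      have hih := ih (insert a A) hA' hD'
      have hstep : α * marg n f a (Bs.erase a) ≤ marg n f a A :=
        hdr A (Bs.erase a) (Finset.subset_erase.2 ⟨hAB, haA⟩) a (Finset.notMem_erase a Bs)
      rw [Finset.sum_insert ha, mul_add]
      have hmA : marg n f a A = f (insert a A) - f A := rfl
      linarith
  intro A Bs hAB
  have h1 := key Bs (Bs \ A) A hAB rfl
  have h2 := mul_le_mul_of_nonneg_left h1 (inv_nonneg.mpr hα.le)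
  rwa [inv_mul_cancel_left₀ hα.ne'] at h2

lemma inner_grad_ME (f : Finset (Elem n) → ℝ) (x : Elem n → ℝ) :
    inner' n x (grad n (ME n B f) x)
      = ∑ e : Choice n B, jointProb n B x e *
          ∑ s : Slot B, (f (chosen n B e Finset.univ) - f (chosen n B e (Finset.univ.erase s))) := by
  classical
  have hp : ∀ i : Elem n, grad n (ME n B f) x i
      = ∑ e : Choice n B, f (chosen n B e Finset.univ) *
          ∑ s : Slot B, (∏ s' ∈ Finset.univ.erase s, prob n x s'.1 (e s')) * dcoef n i s.1 (e s) :=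
    fun i => (hasDerivAt_ME f x i).deriv
  have hQP : ∀ (s : Slot B) (e : Choice n B),
      (∏ s' ∈ Finset.univ.erase s, prob n x s'.1 (e s')) * prob n x s.1 (e s)
        = jointProb n B x e := by
    intro s e
    rw [mul_comm, jointProb]
    exact Finset.mul_prod_erase Finset.univ (fun s' : Slot B => prob n x s'.1 (e s'))
      (Finset.mem_univ s)
  rw [inner']
  simp only [hp]
  have step1 : ∑ i : Elem n, x i * ∑ e : Choice n B, f (chosen n B e Finset.univ) *
          ∑ s : Slot B, (∏ s' ∈ Finset.univ.erase s, prob n x s'.1 (e s')) * dcoef n i s.1 (e s)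
      = ∑ e : Choice n B, ∑ s : Slot B,
          (f (chosen n B e Finset.univ) * ∏ s' ∈ Finset.univ.erase s, prob n x s'.1 (e s'))
            * (prob n x s.1 (e s) - (if e s = none then 1 else 0)) := by
    simp only [Finset.mul_sum]
    rw [Finset.sum_comm]
    refine Finset.sum_congr rfl fun e _ => ?_
    rw [Finset.sum_comm]
    refine Finset.sum_congr rfl fun s _ => ?_
    rw [← sum_x_dcoef x s.1 (e s), Finset.mul_sum]
    refine Finset.sum_congr rfl fun i _ => ?_
    ring
  rw [step1, Finset.sum_comm]
  have step2 : ∀ s : Slot B, ∑ e : Choice n B,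
      (f (chosen n B e Finset.univ) * ∏ s' ∈ Finset.univ.erase s, prob n x s'.1 (e s'))
        * (prob n x s.1 (e s) - (if e s = none then 1 else 0))
      = ∑ e : Choice n B,
          (f (chosen n B e Finset.univ) - f (chosen n B e (Finset.univ.erase s)))
            * jointProb n B x e := by
    intro s
    have hh : ∀ (e : Choice n B) (o : Option (Fin (n s.1))),
        (fun e' : Choice n B => f (chosen n B e' (Finset.univ.erase s))
            * ∏ s' ∈ Finset.univ.erase s, prob n x s'.1 (e' s')) (Function.update e s o)
        = (fun e' : Choice n B => f (chosen n B e' (Finset.univ.erase s))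
            * ∏ s' ∈ Finset.univ.erase s, prob n x s'.1 (e' s')) e := by
      intro e o
      simp only
      congr 1
      · exact congrArg f (chosen_congr _ _ _
          (fun s' hs' => Function.update_of_ne (Finset.mem_erase.1 hs').1 o e))
      · exact Finset.prod_congr rfl fun s' hs' => by
          rw [Function.update_of_ne (Finset.mem_erase.1 hs').1]
    have hsum : ∑ o : Option (Fin (n s.1)), (if o = none then (1:ℝ) else 0)
        = ∑ o : Option (Fin (n s.1)), prob n x s.1 o := by
      rw [Fintype.sum_option, Fintype.sum_option]
      simp only [prob]
      simp
    have hB := sum_choice_mul s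
      (fun e' : Choice n B => f (chosen n B e' (Finset.univ.erase s))
          * ∏ s' ∈ Finset.univ.erase s, prob n x s'.1 (e' s'))
      hh (fun o => if o = none then (1:ℝ) else 0) (prob n x s.1) hsum
    have hA : ∑ e : Choice n B, (f (chosen n B e Finset.univ)
          * ∏ s' ∈ Finset.univ.erase s, prob n x s'.1 (e s')) * (if e s = none then (1:ℝ) else 0)
        = ∑ e : Choice n B, (f (chosen n B e (Finset.univ.erase s))
          * ∏ s' ∈ Finset.univ.erase s, prob n x s'.1 (e s')) * (if e s = none then (1:ℝ) else 0) := by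
      refine Finset.sum_congr rfl fun e _ => ?_
      by_cases ho : e s = none
      · rw [chosen_univ_none e s ho]
      · simp [ho]
    calc ∑ e : Choice n B, (f (chosen n B e Finset.univ)
            * ∏ s' ∈ Finset.univ.erase s, prob n x s'.1 (e s'))
            * (prob n x s.1 (e s) - (if e s = none then 1 else 0))
        = (∑ e : Choice n B, (f (chosen n B e Finset.univ)
            * ∏ s' ∈ Finset.univ.erase s, prob n x s'.1 (e s')) * prob n x s.1 (e s))
          - ∑ e : Choice n B, (f (chosen n B e Finset.univ)
            * ∏ s' ∈ Finset.univ.erase s, prob n x s'.1 (e s'))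
            * (if e s = none then (1:ℝ) else 0) := by
          rw [← Finset.sum_sub_distrib]
          exact Finset.sum_congr rfl fun e _ => by ring
      _ = (∑ e : Choice n B, (f (chosen n B e Finset.univ)
            * ∏ s' ∈ Finset.univ.erase s, prob n x s'.1 (e s')) * prob n x s.1 (e s))
          - ∑ e : Choice n B, (f (chosen n B e (Finset.univ.erase s))
            * ∏ s' ∈ Finset.univ.erase s, prob n x s'.1 (e s')) * prob n x s.1 (e s) := by
          rw [hA, hB]
      _ = ∑ e : Choice n B,
            (f (chosen n B e Finset.univ) - f (chosen n B e (Finset.univ.erase s)))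
              * jointProb n B x e := by
          rw [← Finset.sum_sub_distrib]
          refine Finset.sum_congr rfl fun e _ => ?_
          rw [← hQP s e]
          ring
  calc ∑ s : Slot B, ∑ e : Choice n B,
        (f (chosen n B e Finset.univ) * ∏ s' ∈ Finset.univ.erase s, prob n x s'.1 (e s'))
          * (prob n x s.1 (e s) - (if e s = none then 1 else 0))
      = ∑ s : Slot B, ∑ e : Choice n B,
          (f (chosen n B e Finset.univ) - f (chosen n B e (Finset.univ.erase s)))
            * jointProb n B x e := Finset.sum_congr rfl fun s _ => step2 s
    _ = ∑ e : Choice n B, jointProb n B x e *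
          ∑ s : Slot B, (f (chosen n B e Finset.univ) - f (chosen n B e (Finset.univ.erase s))) := by
        rw [Finset.sum_comm]
        refine Finset.sum_congr rfl fun e _ => ?_
        rw [Finset.mul_sum]
        exact Finset.sum_congr rfl fun s _ => by ring

theorem multinoulliExtension_inner_self_bound {K : ℕ} (n B : Fin K → ℕ) (hn : ∀ k, 1 ≤ n k)
    (hB : ∀ k, 0 < B k) (hBn : ∀ k, B k ≤ n k)
    (f : Finset (Elem n) → ℝ) (hf0 : ∀ S, 0 ≤ f S)
    (hmono : MonotoneSet n f)
    (x : Elem n → ℝ) (hx : InSimplex n x) :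
    (∀ β : ℝ, 1 ≤ β → WeaklyAbove n f β →
      inner' n x (grad n (ME n B f) x) ≤ β * ME n B f x) ∧
    (∀ α : ℝ, 0 < α → α ≤ 1 → WeaklyDR n f α →
      inner' n x (grad n (ME n B f) x) ≤ α⁻¹ * ME n B f x) := by
  classical
  have hPnn : ∀ e : Choice n B, 0 ≤ jointProb n B x e := by
    intro e
    rw [jointProb]
    refine Finset.prod_nonneg fun s _ => ?_
    cases ho : e s with
    | some m => exact hx.1 _
    | none => simp only [prob]; linarith [hx.2 s.1]
  have hmain : ∀ β : ℝ, 1 ≤ β → WeaklyAbove n f β →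
      inner' n x (grad n (ME n B f) x) ≤ β * ME n B f x := by
    intro β hβ hab
    rw [inner_grad_ME]
    have hbound : ∀ e : Choice n B, jointProb n B x e *
        (∑ s : Slot B, (f (chosen n B e Finset.univ) - f (chosen n B e (Finset.univ.erase s))))
        ≤ β * (f (chosen n B e Finset.univ) * jointProb n B x e) := by
      intro e
      have h1 := comb_bound hn f hf0 hmono hβ hab e
      have h2 := mul_le_mul_of_nonneg_left h1 (hPnn e)
      calc jointProb n B x e *
            (∑ s : Slot B, (f (chosen n B e Finset.univ) - f (chosen n B e (Finset.univ.erase s))))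
          ≤ jointProb n B x e * (β * f (chosen n B e Finset.univ)) := h2
        _ = β * (f (chosen n B e Finset.univ) * jointProb n B x e) := by ring
    calc ∑ e : Choice n B, jointProb n B x e *
          ∑ s : Slot B, (f (chosen n B e Finset.univ) - f (chosen n B e (Finset.univ.erase s)))
        ≤ ∑ e : Choice n B, β * (f (chosen n B e Finset.univ) * jointProb n B x e) :=
          Finset.sum_le_sum fun e _ => hbound e
      _ = β * ME n B f x := by rw [ME, Finset.mul_sum]
  refine ⟨hmain, fun α hα0 hα1 hdr => ?_⟩
  exact hmain α⁻¹ (one_le_inv₀ hα0 |>.mpr hα1) (dr_weaklyAbove f hα0 hdr)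

end Multinoulli
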